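/- Let n, k ≥ 1 be integers with k dividing n, and suppose the set of all k-element subsets of {1,…,n} can be partitioned into classes each consisting of n/k pairwise disjoint subsets whose union is {1,…,n} (Baranyai's theorem). Let a : {1,…,n} → ℝ≥0 be a nonnegative weight function with total sum at least n/k. Then the number of k-element subsets S of {1,…,n} with ∑_{i∈S} a(i) ≥ 1 is at least (k/n) · C(n, k). -/

import Mathlib

theorem stmt_8 (n k : ℕ) (hn : 1 ≤ n) (hk : 1 ≤ k) (hdvd : k ∣ n)
    (P : Finset (Finset (Finset (Fin n))))
    (hpart : ∀ S : Finset (Fin n), S.card = k → ∃! C, C ∈ P ∧ S ∈ C)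
    (hclass : ∀ C ∈ P, C.card = n / k ∧ (∀ S ∈ C, S.card = k) ∧
      (∀ S ∈ C, ∀ T ∈ C, S ≠ T → Disjoint S T) ∧ C.sup id = Finset.univ)
    (a : Fin n → ℝ) (ha : ∀ i, 0 ≤ a i) (hsum : (n : ℝ) / (k : ℝ) ≤ ∑ i, a i) :
    ((k : ℝ) / n) * (Nat.choose n k : ℝ) ≤
      (((Finset.univ : Finset (Fin n)).powersetCard k).filter
        (fun S => 1 ≤ ∑ i ∈ S, a i)).card := by
  classical
  have hn0 : (0:ℝ) < n := by exact_mod_cast hn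
  have hk0 : (0:ℝ) < k := by exact_mod_cast hk
  have hnk1 : 1 ≤ n / k := Nat.one_le_div_iff hk |>.mpr (Nat.le_of_dvd hn hdvd)
  have hcastdiv : ((n / k : ℕ) : ℝ) = (n : ℝ) / k := by
    rw [Nat.cast_div hdvd (by exact_mod_cast hk0.ne')]
  set G := ((Finset.univ : Finset (Fin n)).powersetCard k).filter
      (fun S => 1 ≤ ∑ i ∈ S, a i) with hG
  -- every class contains a good set
  have hgood : ∀ C ∈ P, ∃ S ∈ C, 1 ≤ ∑ i ∈ S, a i := by
    intro C hC
    obtain ⟨hcard, hsz, hdisj, hsup⟩ := hclass C hC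
    by_contra h
    push_neg at h
    have hbU : C.biUnion id = Finset.univ := by
      rw [← Finset.sup_eq_biUnion]; exact hsup
    have hsum2 : ∑ S ∈ C, ∑ i ∈ S, a i = ∑ i, a i := by
      rw [← hbU]
      exact (Finset.sum_biUnion (fun S hS T hT hST => hdisj S hS T hT hST)).symm
    have hne : C.Nonempty := Finset.card_pos.mp (by omega)
    have hlt : ∑ S ∈ C, ∑ i ∈ S, a i < ∑ _S ∈ C, (1:ℝ) :=
      Finset.sum_lt_sum_of_nonempty hne (fun S hS => h S hS)
    rw [Finset.sum_const, hcard, nsmul_eq_mul, mul_one, hcastdiv, hsum2] at hlt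
    linarith
  set F : Finset (Finset (Fin n)) → Finset (Fin n) := fun C =>
    if h : ∃ S ∈ C, 1 ≤ ∑ i ∈ S, a i then h.choose else ∅ with hF
  have hFmem : ∀ C ∈ P, F C ∈ C ∧ 1 ≤ ∑ i ∈ F C, a i := by
    intro C hC
    have h := hgood C hC
    simp only [hF, dif_pos h]
    exact ⟨h.choose_spec.1, h.choose_spec.2⟩
  -- injection from P into G
  have hinj : P.card ≤ G.card := by
    apply Finset.card_le_card_of_injOn F
    · intro C hC
      obtain ⟨hmem, hge⟩ := hFmem C hC
      simp only [Finset.mem_coe, hG, Finset.mem_filter, Finset.mem_powersetCard_univ]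
      exact ⟨(hclass C hC).2.1 _ hmem, hge⟩
    · intro C1 h1 C2 h2 heq
      have hm1 := (hFmem C1 h1).1
      have hm2 := (hFmem C2 h2).1
      rw [heq] at hm1
      have hcardS : (F C2).card = k := (hclass C2 h2).2.1 _ hm2
      obtain ⟨C, -, huniq⟩ := hpart (F C2) hcardS
      rw [huniq C1 ⟨h1, hm1⟩, huniq C2 ⟨h2, hm2⟩]
  -- counting: P.card * (n/k) = choose n k
  have hcover : (Finset.univ : Finset (Fin n)).powersetCard k = P.biUnion id := by
    ext S
    simp only [Finset.mem_powersetCard_univ, Finset.mem_biUnion, id]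
    constructor
    · intro hS
      obtain ⟨C, ⟨hC, hSC⟩, -⟩ := hpart S hS
      exact ⟨C, hC, hSC⟩
    · rintro ⟨C, hC, hSC⟩
      exact (hclass C hC).2.1 _ hSC
  have hcount : Nat.choose n k = P.card * (n / k) := by
    have h1 : ((Finset.univ : Finset (Fin n)).powersetCard k).card = Nat.choose n k := by
      rw [Finset.card_powersetCard, Finset.card_univ, Fintype.card_fin]
    rw [← h1, hcover, Finset.card_biUnion]
    · simp only [id_eq]
      rw [Finset.sum_congr rfl (fun C hC => (hclass C hC).1), Finset.sum_const, smul_eq_mul]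
    intro C1 h1 C2 h2 hne
    show Disjoint C1 C2
    rw [Finset.disjoint_left]
    intro S hS1 hS2
    have hcardS : S.card = k := (hclass C1 h1).2.1 _ hS1
    obtain ⟨C, -, huniq⟩ := hpart S hcardS
    exact hne ((huniq C1 ⟨h1, hS1⟩).trans (huniq C2 ⟨h2, hS2⟩).symm)
  have hP : ((k : ℝ) / n) * (Nat.choose n k : ℝ) = P.card := by
    rw [hcount]
    push_cast [hcastdiv]
    field_simp
  rw [hP]
  exact_mod_cast hinj
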